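/- Let π = (π_1,…,π_p) and ρ = (ρ_1,…,ρ_q) be lists of nonnegative integers with π nonincreasing. There exists a simple bipartite graph H with partite sets X = {x_1,…,x_p} and Y = {y_1,…,y_q} (every edge joining X to Y) such that deg_H(x_i) = π_i for all i and deg_H(y_j) = ρ_j for all j, if and only if Σ_{i=1}^p π_i = Σ_{j=1}^q ρ_j and for every k with 1 ≤ k ≤ p one has Σ_{i=1}^k π_i ≤ Σ_{j=1}^q min{k, ρ_j}. -/

import Mathlib

/-- The degree of a vertex: the number of its neighbors. -/
noncomputable def deg {V : Type*} (G : SimpleGraph V) (v : V) : ℕ :=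
  (G.neighborSet v).ncard

open Finset

lemma exists_top {q : ℕ} (ρ : Fin q → ℕ) (d : ℕ) (hd : d ≤ q) :
    ∃ S : Finset (Fin q), S.card = d ∧ ∀ i ∈ S, ∀ j ∉ S, ρ j ≤ ρ i := by
  induction d with
  | zero => exact ⟨∅, rfl, by simp⟩
  | succ d ih =>
    obtain ⟨S, hc, hS⟩ := ih (Nat.le_of_succ_le hd)
    have hne : (Sᶜ : Finset (Fin q)).Nonempty := by
      rw [← Finset.card_pos, Finset.card_compl, Fintype.card_fin, hc]; omega
    obtain ⟨j0, hj0, hmax⟩ := Finset.exists_max_image Sᶜ ρ hne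
    have hj0S : j0 ∉ S := Finset.mem_compl.mp hj0
    refine ⟨insert j0 S, by rw [Finset.card_insert_of_notMem hj0S, hc], ?_⟩
    intro i hi j hj
    have hjS : j ∉ S := fun h => hj (Finset.mem_insert_of_mem h)
    rcases Finset.mem_insert.mp hi with rfl | hi
    · exact hmax j (Finset.mem_compl.mpr hjS)
    · exact hS i hi j hjS

lemma galeRyserMatrix (p : ℕ) : ∀ {q : ℕ} (π : Fin p → ℕ) (ρ : Fin q → ℕ),
    Antitone π → (∑ i, π i = ∑ j, ρ j) →
    (∀ k : ℕ, 1 ≤ k → k ≤ p →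
      ∑ i ∈ univ.filter (fun i : Fin p => (i : ℕ) < k), π i ≤ ∑ j, min k (ρ j)) →
    ∃ A : Fin p → Finset (Fin q), (∀ i, (A i).card = π i) ∧
      (∀ j, (univ.filter (fun i => j ∈ A i)).card = ρ j) := by
  induction p with
  | zero =>
    intro q π ρ _ hsum _
    have h0 : ∀ j, ρ j = 0 := by
      have hz : ∑ j, ρ j = 0 := by simpa using hsum.symm
      intro j; exact (Finset.sum_eq_zero_iff.mp hz) j (mem_univ j)
    exact ⟨fun i => i.elim0, fun i => i.elim0, fun j => by simp [h0 j]⟩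
  | succ p ih =>
    intro q π ρ hmono hsum hineq
    -- step 1: basic facts about d = π 0
    have h1 := hineq 1 le_rfl (Nat.succ_le_succ (Nat.zero_le p))
    have hfilter1 : univ.filter (fun i : Fin (p+1) => (i : ℕ) < 1) = {0} := by
      ext i; simp only [mem_filter, mem_univ, true_and, mem_singleton, Fin.ext_iff, Fin.val_zero]; omega
    have hd1 : π 0 ≤ (univ.filter (fun j => 1 ≤ ρ j)).card := by
      rw [hfilter1, sum_singleton] at h1
      refine h1.trans (le_of_eq ?_)
      rw [Finset.card_filter]
      exact Finset.sum_congr rfl (fun j _ => by split <;> omega)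
    have hdq : π 0 ≤ q := hd1.trans (by simpa using Finset.card_filter_le univ (fun j => 1 ≤ ρ j))
    obtain ⟨S, hScard, hStop⟩ := exists_top ρ (π 0) hdq
    have hSpos : ∀ j ∈ S, 1 ≤ ρ j := by
      by_contra hcon
      push_neg at hcon
      obtain ⟨j0, hj0S, hj00⟩ := hcon
      have hsub : univ.filter (fun j => 1 ≤ ρ j) ⊆ S.erase j0 := by
        intro j hj
        rw [mem_filter] at hj
        rw [Finset.mem_erase]
        refine ⟨by rintro rfl; omega, ?_⟩
        by_contra hjS
        have := hStop j0 hj0S j hjS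
        omega
      have hcc := Finset.card_le_card hsub
      rw [Finset.card_erase_of_mem hj0S, hScard] at hcc
      have hpos : 0 < S.card := Finset.card_pos.mpr ⟨j0, hj0S⟩
      rw [hScard] at hpos
      omega
    set ρ' : Fin q → ℕ := fun j => ρ j - if j ∈ S then 1 else 0 with hρ'def
    have hpoint : ∀ j, ρ' j + (if j ∈ S then 1 else 0) = ρ j := by
      intro j
      by_cases h : j ∈ S
      · have := hSpos j h; simp only [hρ'def, if_pos h]; omega
      · simp [hρ'def, h]
    have hsumρ' : ∑ j, ρ' j + π 0 = ∑ j, ρ j := by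
      have : ∑ j, ρ j = ∑ j, (ρ' j + if j ∈ S then 1 else 0) :=
        (Finset.sum_congr rfl fun j _ => (hpoint j).symm)
      rw [this, Finset.sum_add_distrib]
      congr 1
      rw [Finset.sum_ite_mem, Finset.univ_inter, Finset.sum_const, smul_eq_mul, mul_one, hScard]
    have hsum' : ∑ i : Fin p, π i.succ = ∑ j, ρ' j := by
      have hst := Fin.sum_univ_succ π
      omega
    -- step 2: sum-splitting identity
    have hsplit : ∀ m : ℕ, 1 ≤ m →
        ∑ i ∈ univ.filter (fun i : Fin (p+1) => (i : ℕ) < m), π i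
          = π 0 + ∑ i ∈ univ.filter (fun i : Fin p => (i : ℕ) < m - 1), π i.succ := by
      intro m hm
      rw [Finset.sum_filter, Finset.sum_filter, Fin.sum_univ_succ]
      congr 1
      · simp only [Fin.val_zero]
        exact if_pos (by omega)
      · refine Finset.sum_congr rfl fun i _ => ?_
        have hiff : ((i.succ : Fin (p+1)) : ℕ) < m ↔ (i : ℕ) < m - 1 := by
          rw [Fin.val_succ]; omega
        exact if_congr hiff rfl rfl
    -- step 3: the reduced inequalities
    have hineq' : ∀ k : ℕ, 1 ≤ k → k ≤ p →
        ∑ i ∈ univ.filter (fun i : Fin p => (i : ℕ) < k), π i.succ ≤ ∑ j, min k (ρ' j) := by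
      intro k hk1 hkp
      have hmink : ∀ j, min k (ρ' j) + (if j ∈ S ∧ ρ j ≤ k then 1 else 0) = min k (ρ j) := by
        intro j
        have hv : ρ' j = ρ j - (if j ∈ S then 1 else 0) := rfl
        rw [hv]
        by_cases hjS : j ∈ S
        · have h1 : 1 ≤ ρ j := hSpos j hjS
          rw [if_pos hjS, if_congr (and_iff_right hjS) rfl rfl]
          split <;> omega
        · rw [if_neg hjS, if_neg (by tauto)]
          omega
      have ht_eq : (S.filter (fun j => ρ j ≤ k)).card
          = ∑ j, (if j ∈ S ∧ ρ j ≤ k then 1 else 0) := by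
        have hsets : S.filter (fun j => ρ j ≤ k)
            = univ.filter (fun j => j ∈ S ∧ ρ j ≤ k) := by
          ext j; simp
        rw [hsets, Finset.card_filter]
      set t := (S.filter (fun j => ρ j ≤ k)).card with htdef
      have htd : t ≤ π 0 := by
        rw [← hScard]; exact Finset.card_filter_le S _
      have hsum_min : ∑ j, min k (ρ' j) + t = ∑ j, min k (ρ j) := by
        rw [ht_eq, ← Finset.sum_add_distrib]
        exact Finset.sum_congr rfl fun j _ => hmink j
      have hsplitk := hsplit (k+1) (by omega)
      simp only [Nat.add_sub_cancel] at hsplitk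
      rcases Nat.eq_zero_or_pos t with ht0 | htpos
      · have hK := hineq k hk1 (hkp.trans (Nat.le_succ p))
        have hklt : k < p + 1 := Nat.lt_succ_of_le hkp
        have hπk : π ⟨k, hklt⟩ ≤ π 0 := hmono (Fin.zero_le _)
        have hstep : ∑ i ∈ univ.filter (fun i : Fin (p+1) => (i : ℕ) < k+1), π i
            = ∑ i ∈ univ.filter (fun i : Fin (p+1) => (i : ℕ) < k), π i + π ⟨k, hklt⟩ := by
          have hins : univ.filter (fun i : Fin (p+1) => (i : ℕ) < k+1)
              = insert ⟨k, hklt⟩ (univ.filter (fun i : Fin (p+1) => (i : ℕ) < k)) := by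
            ext i
            simp only [mem_filter, mem_univ, true_and, Finset.mem_insert, Fin.ext_iff]
            omega
          rw [hins, Finset.sum_insert (by simp)]
          ring
        omega
      · obtain ⟨j0, hj0⟩ := Finset.card_pos.mp htpos
        rw [Finset.mem_filter] at hj0
        have hout : ∀ j, j ∉ S → ρ j ≤ k := fun j hj => (hStop j0 hj0.1 j hj).trans hj0.2
        have hcard2 : univ.filter (fun j => k+1 ≤ ρ j) = S.filter (fun j => ¬ ρ j ≤ k) := by
          ext j
          simp only [mem_filter, mem_univ, true_and]
          constructor
          · intro h
            refine ⟨?_, by omega⟩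
            by_contra hjS
            have := hout j hjS
            omega
          · intro h
            omega
        have hcards : t + (S.filter (fun j => ¬ ρ j ≤ k)).card = π 0 := by
          rw [htdef, ← hScard]
          exact Finset.card_filter_add_card_filter_not _
        have e2 : ∑ j, min (k+1) (ρ j)
            = ∑ j, min k (ρ j) + ∑ j, (if k+1 ≤ ρ j then 1 else 0) := by
          rw [← Finset.sum_add_distrib]
          exact Finset.sum_congr rfl fun j _ => by split <;> omega
        have e3 : ∑ j, (if k+1 ≤ ρ j then 1 else 0)
            = (S.filter (fun j => ¬ ρ j ≤ k)).card := by
          rw [← hcard2, Finset.card_filter]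
        have hK1 := hineq (k+1) (by omega) (by omega)
        omega
    -- step 4: recursion and assembly
    obtain ⟨A', hA'row, hA'col⟩ := ih (fun i => π i.succ) ρ'
      (fun a b h => hmono (Fin.succ_le_succ_iff.mpr h)) hsum' hineq'
    refine ⟨Fin.cases S A', ?_, ?_⟩
    · intro i
      induction i using Fin.cases with
      | zero => simpa using hScard
      | succ i => simpa using hA'row i
    · intro j
      rw [Finset.card_filter, Fin.sum_univ_succ]
      simp only [Fin.cases_zero, Fin.cases_succ]
      refine (congrArg₂ (· + ·) (if_congr Iff.rfl rfl rfl) (Finset.sum_congr rfl fun i _ => if_congr Iff.rfl rfl rfl)).trans ?_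
      rw [← Finset.card_filter]
      have h1 := hA'col j
      have h2 := hpoint j
      omega

def mkGraph {p q : ℕ} (A : Fin p → Finset (Fin q)) : SimpleGraph (Fin p ⊕ Fin q) where
  Adj u v :=
    match u, v with
    | Sum.inl i, Sum.inr j => j ∈ A i
    | Sum.inr j, Sum.inl i => j ∈ A i
    | _, _ => False
  symm := ⟨by rintro (i|j) (i'|j') h <;> exact h⟩
  loopless := ⟨by rintro (i|j) h <;> exact h⟩

lemma mkGraph_adj_inl_inr {p q : ℕ} (A : Fin p → Finset (Fin q)) (i : Fin p) (j : Fin q) :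
    (mkGraph A).Adj (Sum.inl i) (Sum.inr j) ↔ j ∈ A i := Iff.rfl

lemma neighborSet_inl {p q : ℕ} (A : Fin p → Finset (Fin q)) (i : Fin p) :
    (mkGraph A).neighborSet (Sum.inl i) = Sum.inr '' ↑(A i) := by
  ext w
  cases w with
  | inl i' =>
    constructor
    · intro h; exact h.elim
    · rintro ⟨j, _, hj⟩; exact (Sum.inr_ne_inl hj).elim
  | inr j =>
    constructor
    · intro h; exact ⟨j, h, rfl⟩
    · rintro ⟨j', hj', hj⟩
      obtain rfl := Sum.inr_injective hj
      exact hj'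

lemma neighborSet_inr {p q : ℕ} (A : Fin p → Finset (Fin q)) (j : Fin q) :
    (mkGraph A).neighborSet (Sum.inr j)
      = Sum.inl '' ↑(univ.filter (fun i => j ∈ A i)) := by
  ext w
  cases w with
  | inl i =>
    constructor
    · intro h; exact ⟨i, by simpa using (show j ∈ A i from h), rfl⟩
    · rintro ⟨i', hi', hj⟩
      obtain rfl := Sum.inl_injective hj
      change j ∈ A _; simpa using hi'
  | inr j' =>
    constructor
    · intro h; exact h.elim
    · rintro ⟨i, _, hj⟩; exact (Sum.inl_ne_inr hj).elim

lemma deg_mk_inl {p q : ℕ} (A : Fin p → Finset (Fin q)) (i : Fin p) :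
    deg (mkGraph A) (Sum.inl i) = (A i).card := by
  rw [deg, neighborSet_inl, Set.ncard_image_of_injective _ Sum.inr_injective,
    Set.ncard_coe_finset]

lemma deg_mk_inr {p q : ℕ} (A : Fin p → Finset (Fin q)) (j : Fin q) :
    deg (mkGraph A) (Sum.inr j) = (univ.filter (fun i => j ∈ A i)).card := by
  rw [deg, neighborSet_inr, Set.ncard_image_of_injective _ Sum.inl_injective,
    Set.ncard_coe_finset]

theorem stmt3 (p q : ℕ) (π : Fin p → ℕ) (ρ : Fin q → ℕ) (hmono : Antitone π) :
    (∃ H : SimpleGraph (Fin p ⊕ Fin q),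
        (∀ i j, ¬ H.Adj (Sum.inl i) (Sum.inl j)) ∧
        (∀ i j, ¬ H.Adj (Sum.inr i) (Sum.inr j)) ∧
        (∀ i, deg H (Sum.inl i) = π i) ∧
        (∀ j, deg H (Sum.inr j) = ρ j)) ↔
      ((∑ i, π i = ∑ j, ρ j) ∧
        ∀ k : ℕ, 1 ≤ k → k ≤ p →
          ∑ i ∈ Finset.univ.filter (fun i : Fin p => (i : ℕ) < k), π i ≤
            ∑ j, min k (ρ j)) := by
  classical
  constructor
  · rintro ⟨H, h1, h2, h3, h4⟩
    set A : Fin p → Finset (Fin q) :=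
      fun i => univ.filter (fun j => H.Adj (Sum.inl i) (Sum.inr j)) with hAdef
    have hiff : ∀ i j, (j ∈ A i) ↔ H.Adj (Sum.inl i) (Sum.inr j) := by
      intro i j; simp [hAdef]
    have hrow : ∀ i, (A i).card = π i := by
      intro i
      rw [← h3 i, deg]
      have hns : H.neighborSet (Sum.inl i) = Sum.inr '' ↑(A i) := by
        ext w
        cases w with
        | inl i' => simp [SimpleGraph.mem_neighborSet, h1 i i']
        | inr j => simp [SimpleGraph.mem_neighborSet, hiff i j]
      rw [hns, Set.ncard_image_of_injective _ Sum.inr_injective, Set.ncard_coe_finset]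
    have hcol : ∀ j, (univ.filter (fun i => j ∈ A i)).card = ρ j := by
      intro j
      rw [← h4 j, deg]
      have hns : H.neighborSet (Sum.inr j)
          = Sum.inl '' ↑(univ.filter (fun i => j ∈ A i)) := by
        ext w
        cases w with
        | inl i =>
          constructor
          · intro hadj
            exact ⟨i, by simp [hiff i j, hadj.symm], rfl⟩
          · rintro ⟨i', hi', hj⟩
            simp only [Finset.coe_filter, Set.mem_setOf_eq] at hi'
            have hadj : H.Adj (Sum.inl i') (Sum.inr j) := (hiff i' j).mp hi'.2
            rw [← hj]
            exact hadj.symm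
        | inr j' =>
          constructor
          · intro hadj; exact (h2 j j' hadj).elim
          · rintro ⟨i, _, hj⟩; exact (Sum.inl_ne_inr hj).elim
      rw [hns, Set.ncard_image_of_injective _ Sum.inl_injective, Set.ncard_coe_finset]
    have hcardA : ∀ i, (A i).card = ∑ j, (if j ∈ A i then 1 else 0) := by
      intro i
      symm
      rw [Finset.sum_ite_mem, Finset.univ_inter]
      exact (Finset.card_eq_sum_ones _).symm
    constructor
    · calc ∑ i, π i = ∑ i, ∑ j, (if j ∈ A i then 1 else 0) :=
            Finset.sum_congr rfl fun i _ => by rw [← hrow i, hcardA i]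
        _ = ∑ j, ∑ i, (if j ∈ A i then 1 else 0) := Finset.sum_comm
        _ = ∑ j, ρ j :=
            Finset.sum_congr rfl fun j _ => by rw [← hcol j, Finset.card_filter]
    · intro k hk1 hkp
      have hFk : (univ.filter (fun i : Fin p => (i : ℕ) < k)).card ≤ k := by
        have := Finset.card_le_card_of_injOn (f := Fin.val)
          (s := univ.filter (fun i : Fin p => (i : ℕ) < k)) (t := Finset.range k)
          (fun i hi => Finset.mem_range.mpr (by simpa using (Finset.mem_filter.mp hi).2))
          (Fin.val_injective.injOn)
        simpa using this
      calc ∑ i ∈ univ.filter (fun i : Fin p => (i : ℕ) < k), π i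
          = ∑ i ∈ univ.filter (fun i : Fin p => (i : ℕ) < k),
              ∑ j, (if j ∈ A i then 1 else 0) :=
            Finset.sum_congr rfl fun i _ => by rw [← hrow i, hcardA i]
        _ = ∑ j, ∑ i ∈ univ.filter (fun i : Fin p => (i : ℕ) < k),
              (if j ∈ A i then 1 else 0) := Finset.sum_comm
        _ ≤ ∑ j, min k (ρ j) := by
            refine Finset.sum_le_sum fun j _ => ?_
            rw [← Finset.card_filter]
            refine le_min ((Finset.card_filter_le _ _).trans hFk) ?_
            rw [← hcol j]
            refine Finset.card_le_card ?_
            intro x hx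
            simp only [Finset.mem_filter] at hx ⊢
            exact ⟨Finset.mem_univ x, hx.2⟩
  · rintro ⟨hsum, hineq⟩
    obtain ⟨A, hrow, hcol⟩ := galeRyserMatrix p π ρ hmono hsum hineq
    exact ⟨mkGraph A, fun i j h => h, fun i j h => h,
      fun i => by rw [deg_mk_inl]; exact hrow i,
      fun j => by rw [deg_mk_inr]; exact hcol j⟩
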